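/- Let n be a positive integer and let f : (ℝ_{>0})^n → (ℝ_{>0})^n be a homogeneous, monotone function. All super-eigenspaces S^λ(f), λ > 0, are bounded in the Hilbert projective metric (i.e. have finite d_H-diameter) if and only if f is indecomposable. -/

import Mathlib

/-- Hilbert's projective metric on the positive cone:
`d_H(y,z) = max_i log(y_i/z_i) - min_i log(y_i/z_i)`. -/
noncomputable def dH {n : ℕ} (y z : Fin n → ℝ) : ℝ :=
  (⨆ i, Real.log (y i / z i)) - (⨅ i, Real.log (y i / z i))

/-- `f` is decomposable: there is a non-trivial partition `I ∪ J = {1,…,n}`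
(here `I = Jᶜ`) such that for every `i ∈ I` the monotone function
`u ↦ f_i(u_J)` is bounded above, where `(u_J)_k = u` for `k ∈ J` and `1` otherwise. -/
def Decomposable {n : ℕ} (f : (Fin n → ℝ) → (Fin n → ℝ)) : Prop :=
  ∃ J : Finset (Fin n), J.Nonempty ∧ Jᶜ.Nonempty ∧
    ∀ i ∈ Jᶜ, ∃ M : ℝ, ∀ u : ℝ, 0 < u →
      f (fun k => if k ∈ J then u else 1) i ≤ M


open Filter Finset Real

lemma gg_extract_one (g : ℕ → ℝ) :
    ∃ φ : ℕ → ℕ, StrictMono φ ∧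
      ((∃ C, ∀ m, g (φ m) ≤ C) ∨ (∀ u : ℝ, ∃ N, ∀ m, N ≤ m → u ≤ g (φ m))) := by
  by_cases h : ∃ C : ℝ, ∃ᶠ k in atTop, g k ≤ C
  · obtain ⟨C, hC⟩ := h
    obtain ⟨φ, hφ, hP⟩ := Filter.extraction_of_frequently_atTop hC
    exact ⟨φ, hφ, Or.inl ⟨C, hP⟩⟩
  · push_neg at h
    refine ⟨id, strictMono_id, Or.inr fun u => ?_⟩
    have h2 := h u
    obtain ⟨N, hN⟩ := Filter.eventually_atTop.mp h2
    exact ⟨N, fun m hm => (hN m hm).le⟩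

lemma gg_extract_all {ι : Type*} [DecidableEq ι] (s : Finset ι) (g : ℕ → ι → ℝ) :
    ∃ φ : ℕ → ℕ, StrictMono φ ∧ ∀ i ∈ s,
      ((∃ C, ∀ m, g (φ m) i ≤ C) ∨ (∀ u : ℝ, ∃ N, ∀ m, N ≤ m → u ≤ g (φ m) i)) := by
  induction s using Finset.induction_on with
  | empty => exact ⟨id, strictMono_id, fun i hi => absurd hi (Finset.notMem_empty i)⟩
  | insert _ _ ha ih =>
    rename_i a s
    obtain ⟨φ₁, hφ₁, h₁⟩ := ih
    obtain ⟨φ₂, hφ₂, h₂⟩ := gg_extract_one (fun m => g (φ₁ m) a)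
    refine ⟨φ₁ ∘ φ₂, hφ₁.comp hφ₂, fun i hi => ?_⟩
    rcases Finset.mem_insert.mp hi with rfl | his
    · rcases h₂ with ⟨C, hC⟩ | h2
      · exact Or.inl ⟨C, fun m => hC m⟩
      · exact Or.inr h2
    · rcases h₁ i his with ⟨C, hC⟩ | h2
      · exact Or.inl ⟨C, fun m => hC (φ₂ m)⟩
      · refine Or.inr fun u => ?_
        obtain ⟨N, hN⟩ := h2 u
        exact ⟨N, fun m hm => hN (φ₂ m) (hm.trans hφ₂.le_apply)⟩


/-- multiplicative spread in log scale -/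
noncomputable def gg_spr {n : ℕ} [Nonempty (Fin n)] (z : Fin n → ℝ) : ℝ :=
  univ.sup' univ_nonempty (fun i => Real.log (z i)) -
    univ.inf' univ_nonempty (fun i => Real.log (z i))

lemma gg_dH_eq {n : ℕ} [Nonempty (Fin n)] (x y : Fin n → ℝ) :
    dH x y = univ.sup' univ_nonempty (fun i => Real.log (x i / y i)) -
      univ.inf' univ_nonempty (fun i => Real.log (x i / y i)) := by
  rw [dH, Finset.sup'_univ_eq_ciSup, Finset.inf'_univ_eq_ciInf]

lemma gg_dH_le {n : ℕ} [Nonempty (Fin n)] (x y : Fin n → ℝ)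
    (hx : ∀ i, 0 < x i) (hy : ∀ i, 0 < y i) :
    dH x y ≤ gg_spr x + gg_spr y := by
  rw [gg_dH_eq]
  have hlog : ∀ i : Fin n, Real.log (x i / y i) = Real.log (x i) - Real.log (y i) :=
    fun i => Real.log_div (hx i).ne' (hy i).ne'
  have h1 : univ.sup' univ_nonempty (fun i => Real.log (x i / y i)) ≤
      univ.sup' univ_nonempty (fun i => Real.log (x i)) -
        univ.inf' univ_nonempty (fun i => Real.log (y i)) := by
    refine Finset.sup'_le _ _ fun i _ => ?_
    rw [hlog i]
    exact sub_le_sub (Finset.le_sup' (fun i => Real.log (x i)) (mem_univ i)) (Finset.inf'_le _ (mem_univ i))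
  have h2 : univ.inf' univ_nonempty (fun i => Real.log (x i)) -
      univ.sup' univ_nonempty (fun i => Real.log (y i)) ≤
        univ.inf' univ_nonempty (fun i => Real.log (x i / y i)) := by
    refine Finset.le_inf' _ _ fun i _ => ?_
    rw [hlog i]
    exact sub_le_sub (Finset.inf'_le _ (mem_univ i)) (Finset.le_sup' (fun i => Real.log (y i)) (mem_univ i))
  rw [gg_spr, gg_spr]
  linarith


lemma gg_norm {n : ℕ} [Nonempty (Fin n)] (f : (Fin n → ℝ) → (Fin n → ℝ)) (lam : ℝ)
    (hhom : ∀ c : ℝ, 0 < c → ∀ x : Fin n → ℝ, (∀ i, 0 < x i) → f (c • x) = c • f x)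
    (z : Fin n → ℝ) (hz : ∀ i, 0 < z i) (hfz : f z ≤ lam • z) (m : ℝ) (hm : m < gg_spr z) :
    ∃ w : Fin n → ℝ, (∀ i, 0 < w i) ∧ f w ≤ lam • w ∧ (∀ i, 1 ≤ w i) ∧
      (∃ i, w i = 1) ∧ (∃ i, Real.exp m ≤ w i) := by
  obtain ⟨i₀, -, hi₀⟩ := Finset.exists_mem_eq_inf' (univ_nonempty) (fun i => Real.log (z i))
  obtain ⟨i₁, -, hi₁⟩ := Finset.exists_mem_eq_sup' (univ_nonempty) (fun i => Real.log (z i))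
  have hc0 : 0 < z i₀ := hz i₀
  have hmin : ∀ i, z i₀ ≤ z i := by
    intro i
    have h : Real.log (z i₀) ≤ Real.log (z i) := by
      rw [← hi₀]; exact Finset.inf'_le _ (mem_univ i)
    exact (Real.log_le_log_iff hc0 (hz i)).mp h
  refine ⟨(z i₀)⁻¹ • z, ?_, ?_, ?_, ⟨i₀, ?_⟩, ⟨i₁, ?_⟩⟩
  · intro i
    have := mul_pos (inv_pos.mpr hc0) (hz i)
    simpa [smul_eq_mul] using this
  · rw [hhom _ (inv_pos.mpr hc0) z hz]
    intro i
    have h := hfz i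
    simp only [Pi.smul_apply, smul_eq_mul] at h ⊢
    calc (z i₀)⁻¹ * f z i ≤ (z i₀)⁻¹ * (lam * z i) :=
          mul_le_mul_of_nonneg_left h (inv_pos.mpr hc0).le
      _ = lam * ((z i₀)⁻¹ * z i) := by ring
  · intro i
    have h := mul_le_mul_of_nonneg_left (hmin i) (inv_pos.mpr hc0).le
    rw [inv_mul_cancel₀ hc0.ne'] at h
    simpa [smul_eq_mul] using h
  · simp [smul_eq_mul, inv_mul_cancel₀ hc0.ne']
  · have hsp : m < Real.log (z i₁) - Real.log (z i₀) := by
      rw [gg_spr, hi₀, hi₁] at hm; exact hm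
    have h : Real.exp m ≤ Real.exp (Real.log (z i₁) - Real.log (z i₀)) :=
      Real.exp_le_exp.mpr hsp.le
    rw [Real.exp_sub, Real.exp_log (hz i₁), Real.exp_log (hc0)] at h
    simpa [smul_eq_mul, div_eq_inv_mul] using h

lemma gg_forward {n : ℕ} (hn : 0 < n) (f : (Fin n → ℝ) → (Fin n → ℝ))
    (hmaps : ∀ x : Fin n → ℝ, (∀ i, 0 < x i) → ∀ i, 0 < f x i)
    (hhom : ∀ c : ℝ, 0 < c → ∀ x : Fin n → ℝ, (∀ i, 0 < x i) → f (c • x) = c • f x)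
    (hmono : ∀ x y : Fin n → ℝ, (∀ i, 0 < x i) → (∀ i, 0 < y i) → x ≤ y → f x ≤ f y)
    (hb : ∀ lam : ℝ, 0 < lam → ∃ M : ℝ,
      ∀ x y : Fin n → ℝ,
        (∀ i, 0 < x i) → f x ≤ lam • x →
        (∀ i, 0 < y i) → f y ≤ lam • y →
        dH x y ≤ M) : ¬ Decomposable f := by
  haveI : Nonempty (Fin n) := ⟨⟨0, hn⟩⟩
  classical
  rintro ⟨J, hJ, hJc, hbd⟩
  choose Mi hMi using hbd
  -- a uniform bound over Jᶜ
  set g : Fin n → ℝ := fun i => if h : i ∈ Jᶜ then Mi i h else 0 with hg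
  set M₀ : ℝ := univ.sup' univ_nonempty g with hM₀
  have hM₀bd : ∀ i (h : i ∈ Jᶜ), ∀ u : ℝ, 0 < u →
      f (fun k => if k ∈ J then u else 1) i ≤ M₀ := by
    intro i h u hu
    have h1 : Mi i h ≤ M₀ := by
      have : g i = Mi i h := dif_pos h
      rw [← this]
      exact Finset.le_sup' g (mem_univ i)
    exact (hMi i h u hu).trans h1
  set x : Fin n → ℝ := fun _ => 1 with hx
  have hxpos : ∀ i, 0 < x i := fun i => one_pos
  set A : ℝ := univ.sup' univ_nonempty (f x) with hA
  set lam : ℝ := max (max A M₀) 1 with hlam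
  have hlam0 : (0:ℝ) < lam := lt_of_lt_of_le one_pos (le_max_right _ _)
  have hAlam : A ≤ lam := le_trans (le_max_left _ _) (le_max_left _ _)
  have hM₀lam : M₀ ≤ lam := le_trans (le_max_right _ _) (le_max_left _ _)
  obtain ⟨M, hM⟩ := hb lam hlam0
  set u : ℝ := Real.exp (max M 0 + 1) with hu
  have hu1 : 1 ≤ u := Real.one_le_exp (by positivity)
  have hu0 : 0 < u := lt_of_lt_of_le one_pos hu1
  set y : Fin n → ℝ := fun k => if k ∈ J then u else 1 with hy
  have hypos : ∀ i, 0 < y i := by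
    intro i; rw [hy]; dsimp only; split <;> [exact hu0; exact one_pos]
  have hfx : f x ≤ lam • x := by
    intro i
    have : f x i ≤ A := Finset.le_sup' (f x) (mem_univ i)
    simpa [smul_eq_mul, hx] using this.trans hAlam
  have hfy : f y ≤ lam • y := by
    intro i
    by_cases hiJ : i ∈ J
    · have hyx : y ≤ u • x := by
        intro k
        rw [hy]; dsimp only
        split
        · simp [hx]
        · simpa [hx, smul_eq_mul] using hu1
      have h1 : f y i ≤ f (u • x) i := hmono y (u • x) hypos
        (fun i => by simpa [hx, smul_eq_mul] using hu0) hyx i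
      rw [hhom u hu0 x hxpos] at h1
      have h2 : f x i ≤ A := Finset.le_sup' (f x) (mem_univ i)
      have : u * f x i ≤ u * lam := mul_le_mul_of_nonneg_left (h2.trans hAlam) hu0.le
      simp only [Pi.smul_apply, smul_eq_mul] at h1 ⊢
      rw [hy]; dsimp only; rw [if_pos hiJ]
      calc f y i ≤ u * f x i := h1
        _ ≤ u * lam := this
        _ = lam * u := mul_comm _ _
    · have hiJc : i ∈ Jᶜ := Finset.mem_compl.mpr hiJ
      have h1 : f y i ≤ M₀ := hM₀bd i hiJc u hu0
      simp only [Pi.smul_apply, smul_eq_mul]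
      rw [hy]; dsimp only; rw [if_neg hiJ]
      calc f y i ≤ M₀ := h1
        _ ≤ lam := hM₀lam
        _ = lam * 1 := (mul_one lam).symm
  have hdle := hM x y hxpos hfx hypos hfy
  -- compute dH x y
  have hcomp : dH x y = max M 0 + 1 := by
    rw [gg_dH_eq]
    have hval : ∀ i : Fin n, Real.log (x i / y i) =
        if i ∈ J then -(max M 0 + 1) else 0 := by
      intro i
      rw [hx, hy]; dsimp only
      split
      · rw [one_div, Real.log_inv, hu, Real.log_exp]
      · simp
    have hsup : univ.sup' univ_nonempty (fun i => Real.log (x i / y i)) = 0 := by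
      apply le_antisymm
      · refine Finset.sup'_le _ _ fun i _ => ?_
        rw [hval i]
        split
        · linarith [le_max_right M 0]
        · exact le_refl 0
      · obtain ⟨j, hj⟩ := hJc
        have := Finset.le_sup' (fun i => Real.log (x i / y i)) (mem_univ j)
        rw [hval j, if_neg (Finset.mem_compl.mp hj)] at this
        exact this
    have hinf : univ.inf' univ_nonempty (fun i => Real.log (x i / y i)) =
        -(max M 0 + 1) := by
      apply le_antisymm
      · obtain ⟨j, hj⟩ := hJ
        have := Finset.inf'_le (fun i => Real.log (x i / y i)) (mem_univ j)
        rw [hval j, if_pos hj] at this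
        exact this
      · refine Finset.le_inf' _ _ fun i _ => ?_
        rw [hval i]
        split
        · exact le_refl _
        · linarith [le_max_right M 0]
    rw [hsup, hinf]; ring
  rw [hcomp] at hdle
  linarith [le_max_left M 0]

lemma gg_reverse {n : ℕ} (hn : 0 < n) (f : (Fin n → ℝ) → (Fin n → ℝ))
    (hmaps : ∀ x : Fin n → ℝ, (∀ i, 0 < x i) → ∀ i, 0 < f x i)
    (hhom : ∀ c : ℝ, 0 < c → ∀ x : Fin n → ℝ, (∀ i, 0 < x i) → f (c • x) = c • f x)
    (hmono : ∀ x y : Fin n → ℝ, (∀ i, 0 < x i) → (∀ i, 0 < y i) → x ≤ y → f x ≤ f y)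
    (hind : ¬ Decomposable f) : ∀ lam : ℝ, 0 < lam → ∃ M : ℝ,
      ∀ x y : Fin n → ℝ,
        (∀ i, 0 < x i) → f x ≤ lam • x →
        (∀ i, 0 < y i) → f y ≤ lam • y →
        dH x y ≤ M := by
  haveI : Nonempty (Fin n) := ⟨⟨0, hn⟩⟩
  classical
  intro lam hlam
  by_contra hMn
  push_neg at hMn
  -- build a sequence of normalized super-eigenvectors with unbounded spread
  have key : ∀ m : ℕ, ∃ w : Fin n → ℝ, (∀ i, 0 < w i) ∧ f w ≤ lam • w ∧
      (∀ i, 1 ≤ w i) ∧ (∃ i, w i = 1) ∧ (∃ i, Real.exp m ≤ w i) := by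
    intro m
    obtain ⟨x, y, hx, hfx, hy, hfy, hd⟩ := hMn (2 * m)
    have hle := gg_dH_le x y hx hy
    have hor : (m : ℝ) < gg_spr x ∨ (m : ℝ) < gg_spr y := by
      by_contra hc
      push_neg at hc
      have := hc.1
      have := hc.2
      linarith
    rcases hor with h | h
    · exact gg_norm f lam hhom x hx hfx m h
    · exact gg_norm f lam hhom y hy hfy m h
  choose w hw using key
  obtain ⟨φ, hφ, hdich⟩ := gg_extract_all (univ : Finset (Fin n)) w
  set J : Finset (Fin n) := univ.filter (fun i => ∀ C : ℝ, ∃ m, C < w (φ m) i) with hJdef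
  have hmemJ : ∀ i : Fin n, i ∈ J ↔ ∀ C : ℝ, ∃ m, C < w (φ m) i := by
    intro i; rw [hJdef]; simp
  have hbdd : ∀ i : Fin n, i ∉ J → ∃ C, ∀ m, w (φ m) i ≤ C := by
    intro i hi
    rw [hmemJ] at hi
    push_neg at hi
    obtain ⟨C, hC⟩ := hi
    exact ⟨C, fun m => hC m⟩
  have htend : ∀ i ∈ J, ∀ u : ℝ, ∃ N, ∀ m, N ≤ m → u ≤ w (φ m) i := by
    intro i hi u
    rcases hdich i (mem_univ i) with ⟨C, hC⟩ | h
    · exfalso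
      obtain ⟨m, hm⟩ := (hmemJ i).mp hi C
      exact absurd (hC m) (not_le.mpr hm)
    · exact h u
  have hJne : J.Nonempty := by
    rw [Finset.nonempty_iff_ne_empty]
    intro hJe
    have hball : ∀ i : Fin n, ∃ C, ∀ m, w (φ m) i ≤ C := by
      intro i
      exact hbdd i (by rw [hJe]; exact Finset.notMem_empty i)
    choose Cf hCf using hball
    set C : ℝ := univ.sup' univ_nonempty Cf with hC
    set m : ℕ := ⌈C⌉₊ with hm
    obtain ⟨i, hi⟩ := (hw (φ m)).2.2.2.2
    have h1 : w (φ m) i ≤ C := (hCf i m).trans (Finset.le_sup' Cf (mem_univ i))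
    have h2 : ((φ m : ℕ) : ℝ) + 1 ≤ Real.exp (φ m) := Real.add_one_le_exp _
    have h3 : (m : ℝ) ≤ (φ m : ℕ) := Nat.cast_le.mpr hφ.le_apply
    have h4 : C ≤ (m : ℝ) := Nat.le_ceil C
    linarith
  have hJcne : Jᶜ.Nonempty := by
    rw [Finset.nonempty_iff_ne_empty]
    intro hJce
    have hallJ : ∀ i : Fin n, i ∈ J := by
      intro i
      by_contra hi
      have : i ∈ Jᶜ := Finset.mem_compl.mpr hi
      rw [hJce] at this
      exact Finset.notMem_empty i this
    have hev : ∀ᶠ m in atTop, ∀ i : Fin n, (2:ℝ) ≤ w (φ m) i := by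
      rw [Filter.eventually_all]
      intro i
      obtain ⟨N, hN⟩ := htend i (hallJ i) 2
      exact eventually_atTop.mpr ⟨N, hN⟩
    obtain ⟨m, hm⟩ := hev.exists
    obtain ⟨i, hi⟩ := (hw (φ m)).2.2.2.1
    have := hm i
    rw [hi] at this
    linarith
  apply hind
  refine ⟨J, hJne, hJcne, fun i hic => ?_⟩
  obtain ⟨C, hC⟩ := hbdd i (Finset.mem_compl.mp hic)
  refine ⟨lam * C, fun u hu => ?_⟩
  have hev : ∀ᶠ m in atTop, ∀ j ∈ J, u ≤ w (φ m) j := by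
    rw [eventually_all_finset]
    intro j hj
    obtain ⟨N, hN⟩ := htend j hj u
    exact eventually_atTop.mpr ⟨N, hN⟩
  obtain ⟨m, hm⟩ := hev.exists
  set W : Fin n → ℝ := w (φ m) with hW
  obtain ⟨hWpos, hWf, hW1, -, -⟩ := hw (φ m)
  set uJ : Fin n → ℝ := fun k => if k ∈ J then u else 1 with huJ
  have huJpos : ∀ k, 0 < uJ k := by
    intro k; rw [huJ]; dsimp only; split <;> [exact hu; exact one_pos]
  have hle : uJ ≤ W := by
    intro k
    rw [huJ]; dsimp only
    split
    · exact hm k ‹_›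
    · exact hW1 k
  have h1 : f uJ i ≤ f W i := hmono uJ W huJpos hWpos hle i
  have h2 : f W i ≤ lam * W i := by
    have := hWf i
    simpa [smul_eq_mul] using this
  have h3 : lam * W i ≤ lam * C := mul_le_mul_of_nonneg_left (hC m) hlam.le
  exact h1.trans (h2.trans h3)

theorem super_eigenspaces_bounded_iff_indecomposable
    (n : ℕ) (hn : 0 < n) (f : (Fin n → ℝ) → (Fin n → ℝ))
    (hmaps : ∀ x : Fin n → ℝ, (∀ i, 0 < x i) → ∀ i, 0 < f x i)
    (hhom : ∀ c : ℝ, 0 < c → ∀ x : Fin n → ℝ, (∀ i, 0 < x i) → f (c • x) = c • f x)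
    (hmono : ∀ x y : Fin n → ℝ, (∀ i, 0 < x i) → (∀ i, 0 < y i) → x ≤ y → f x ≤ f y) :
    (∀ lam : ℝ, 0 < lam → ∃ M : ℝ,
      ∀ x y : Fin n → ℝ,
        (∀ i, 0 < x i) → f x ≤ lam • x →
        (∀ i, 0 < y i) → f y ≤ lam • y →
        dH x y ≤ M) ↔ ¬ Decomposable f :=
  ⟨gg_forward hn f hmaps hhom hmono, gg_reverse hn f hmaps hhom hmono⟩
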